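/- For n ≥ 2 and distinct points a₁,…,a_p in the open unit ball D of ℝⁿ and distinct points b₁,…,b_q in D with p ≠ q, the spaces D \ {a₁,…,a_p} and D \ {b₁,…,b_q} are not homeomorphic. -/

import Mathlib

open Set Metric

/-- The annulus (or punctured ball) `{x | s < dist x c < t}`. -/
def myAnn {E : Type*} [PseudoMetricSpace E] (c : E) (s t : ℝ) : Set E :=
  {x : E | s < dist x c ∧ dist x c < t}

lemma isOpen_myAnn {E : Type*} [PseudoMetricSpace E] (c : E) (s t : ℝ) :
    IsOpen (myAnn c s t) := by
  have : myAnn c s t = {x : E | s < dist x c} ∩ {x : E | dist x c < t} := rfl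
  rw [this]
  exact (isOpen_lt continuous_const (continuous_id.dist continuous_const)).inter
    (isOpen_lt (continuous_id.dist continuous_const) continuous_const)

lemma isPreconnected_myAnn {E : Type*} [NormedAddCommGroup E] [NormedSpace ℝ E]
    (h : 1 < Module.rank ℝ E) (c : E) {s t : ℝ} (hs : 0 ≤ s) :
    IsPreconnected (myAnn c s t) := by
  have himg : myAnn c s t
      = (fun p : ℝ × E => c + p.1 • p.2) '' (Set.Ioo s t ×ˢ Metric.sphere (0 : E) 1) := by
    ext x
    constructor
    · rintro ⟨h1, h2⟩
      have hd : 0 < dist x c := lt_of_le_of_lt hs h1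
      refine ⟨(dist x c, (dist x c)⁻¹ • (x - c)), ⟨⟨h1, h2⟩, ?_⟩, ?_⟩
      · simp only [mem_sphere_iff_norm, sub_zero, norm_smul, norm_inv, Real.norm_eq_abs,
          abs_of_pos hd]
        rw [dist_eq_norm] at hd ⊢
        field_simp
      · simp only
        rw [smul_inv_smul₀ (by positivity)]
        abel
    · rintro ⟨⟨u, y⟩, ⟨⟨hu1, hu2⟩, hy⟩, rfl⟩
      have hu0 : 0 < u := lt_of_le_of_lt hs hu1
      have : dist (c + u • y) c = u := by
        rw [dist_eq_norm, add_sub_cancel_left, norm_smul, Real.norm_eq_abs, abs_of_pos hu0]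
        simp only [mem_sphere_iff_norm, sub_zero] at hy
        rw [hy, mul_one]
      show s < dist (c + u • y) c ∧ dist (c + u • y) c < t
      rw [this]; exact ⟨hu1, hu2⟩
  rw [himg]
  exact (isPreconnected_Ioo.prod (isPreconnected_sphere h 0 1)).image _
    (continuous_const.add (continuous_fst.smul continuous_snd)).continuousOn

open Set Metric

noncomputable def e₀ (n : ℕ) (hn : 0 < n) : EuclideanSpace ℝ (Fin n) :=
  EuclideanSpace.single (⟨0, hn⟩ : Fin n) (1 : ℝ)

section Euc
variable {n : ℕ}

local notation "E" => EuclideanSpace ℝ (Fin n)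
variable (hn : 0 < n)
include hn

lemma norm_smul_e₀ (u : ℝ) : ‖u • e₀ n hn‖ = |u| := by
  rw [norm_smul, Real.norm_eq_abs, e₀, EuclideanSpace.norm_single]
  simp

lemma dist_add_smul_e₀ (c : E) (u : ℝ) : dist (c + u • e₀ n hn) c = |u| := by
  rw [dist_eq_norm, add_sub_cancel_left, norm_smul_e₀]

lemma myAnn_nonempty (c : E) {s t : ℝ} (hs : 0 ≤ s) (hst : s < t) :
    (myAnn c s t).Nonempty := by
  refine ⟨c + ((s + t) / 2) • e₀ n hn, ?_, ?_⟩ <;>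
    rw [dist_add_smul_e₀ hn c, abs_of_pos (by linarith)] <;> linarith

/-- The center is in the closure of the punctured ball. -/
lemma center_mem_closure_myAnn (c : E) {t : ℝ} (ht : 0 < t) :
    c ∈ closure (myAnn c 0 t) := by
  rw [Metric.mem_closure_iff]
  intro δ hδ
  set u : ℝ := min δ t / 2 with hu
  have hu0 : 0 < u := by positivity
  refine ⟨c + u • e₀ n hn, ⟨?_, ?_⟩, ?_⟩
  · rw [dist_add_smul_e₀ hn c, abs_of_pos hu0]; exact hu0
  · rw [dist_add_smul_e₀ hn c, abs_of_pos hu0]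
    have := min_le_right δ t
    calc u ≤ t / 2 := by rw [hu]; linarith
    _ < t := by linarith
  · rw [dist_comm, dist_add_smul_e₀ hn c, abs_of_pos hu0]
    have := min_le_left δ t
    calc u ≤ δ / 2 := by rw [hu]; linarith
    _ < δ := by linarith

/-- An outer-boundary point is in the closure of the annulus. -/
lemma outer_mem_closure_myAnn (c : E) {s t : ℝ} (hs : 0 ≤ s) (hst : s < t) :
    c + t • e₀ n hn ∈ closure (myAnn c s t) := by
  rw [Metric.mem_closure_iff]
  intro δ hδ
  set m : ℝ := min δ (t - s) / 2 with hm
  have hm0 : 0 < m := by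
    have := lt_min hδ (by linarith : (0:ℝ) < t - s)
    rw [hm]; linarith
  have h1 := min_le_right δ (t - s)
  have h2 := min_le_left δ (t - s)
  have hmts : m ≤ (t - s) / 2 := by rw [hm]; linarith
  have hmδ : m ≤ δ / 2 := by rw [hm]; linarith
  refine ⟨c + (t - m) • e₀ n hn, ⟨?_, ?_⟩, ?_⟩
  · rw [dist_add_smul_e₀ hn c, abs_of_pos (by linarith)]; linarith
  · rw [dist_add_smul_e₀ hn c, abs_of_pos (by linarith)]; linarith
  · rw [dist_eq_norm, add_sub_add_left_eq_sub, ← sub_smul, norm_smul_e₀]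
    have : t - (t - m) = m := by ring
    rw [this, abs_of_pos hm0]
    linarith

end Euc
open Set Metric

/-- If `V ⊆ X` has a closure point outside `X`, then as a subset of the subspace `X`
its closure is not compact. -/
lemma noncompact_closure_of_limit {E : Type*} [TopologicalSpace E] [T2Space E]
    {X : Set E} {V : Set E} {z : E} (hVX : V ⊆ X) (hz : z ∈ closure V) (hzX : z ∉ X) :
    ¬ IsCompact (closure ((Subtype.val : X → E) ⁻¹' V)) := by
  intro h
  have h2 : IsCompact (Subtype.val '' closure ((Subtype.val : X → E) ⁻¹' V)) :=
    h.image continuous_subtype_val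
  have h3 : IsClosed (Subtype.val '' closure ((Subtype.val : X → E) ⁻¹' V)) := h2.isClosed
  have h4 : V ⊆ Subtype.val '' closure ((Subtype.val : X → E) ⁻¹' V) := by
    intro x hx
    exact ⟨⟨x, hVX hx⟩, subset_closure hx, rfl⟩
  have h5 : z ∈ Subtype.val '' closure ((Subtype.val : X → E) ⁻¹' V) :=
    (closure_minimal h4 h3) hz
  obtain ⟨w, -, rfl⟩ := h5
  exact hzX w.2

/-- The number of "ends" of a space is at least `k`: there is a compact set `K` and `k`
pairwise disjoint nonempty preconnected clopen-in-`Kᶜ` subsets with non-compact closure. -/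
def EndsGe (X : Type*) [TopologicalSpace X] (k : ℕ) : Prop :=
  ∃ (K : Set X) (U : Fin k → Set X), IsCompact K ∧
    (∀ i, U i ⊆ Kᶜ ∧ (U i).Nonempty ∧ IsPreconnected (U i) ∧ IsOpen (U i) ∧
      IsOpen (Kᶜ \ U i) ∧ ¬ IsCompact (closure (U i))) ∧
    Pairwise fun i j => Disjoint (U i) (U j)

lemma EndsGe.of_homeomorph {X Y : Type*} [TopologicalSpace X] [TopologicalSpace Y]
    (h : X ≃ₜ Y) {k : ℕ} (hX : EndsGe X k) : EndsGe Y k := by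
  obtain ⟨K, U, hK, hU, hdisj⟩ := hX
  refine ⟨h '' K, fun i => h '' U i, h.isCompact_image.2 hK, fun i => ?_, ?_⟩
  · obtain ⟨hsub, hne, hconn, hopen, hopen', hncpt⟩ := hU i
    have himgc : ∀ S : Set X, h '' Sᶜ = (h '' S)ᶜ := fun S =>
      Set.image_compl_eq h.bijective
    refine ⟨?_, hne.image _, h.isPreconnected_image.2 hconn, h.isOpen_image.2 hopen, ?_, ?_⟩
    · rw [← himgc]; exact Set.image_mono hsub
    · have : (h '' K)ᶜ \ h '' U i = h '' (Kᶜ \ U i) := by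
        rw [Set.image_diff h.injective, himgc]
      rw [this]; exact h.isOpen_image.2 hopen'
    · rw [← h.image_closure]
      intro hc
      exact hncpt (h.isCompact_image.1 hc)
  · intro i j hij
    exact (Set.disjoint_image_iff h.injective).2 (hdisj hij)

section Main
variable {n : ℕ}
local notation "E" => EuclideanSpace ℝ (Fin n)

lemma endsGe_ball_diff (hn : 2 ≤ n) {p : ℕ} (a : Fin p → E)
    (ha : Function.Injective a) (haD : ∀ i, a i ∈ Metric.ball (0 : E) 1) :
    EndsGe ↥(Metric.ball (0 : E) 1 \ Set.range a : Set E) (p + 1) := by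
  have hn0 : 0 < n := by omega
  have hrank : 1 < Module.rank ℝ (EuclideanSpace ℝ (Fin n)) :=
    Module.one_lt_rank_of_one_lt_finrank (by rw [finrank_euclideanSpace_fin]; omega)
  set X : Set E := Metric.ball (0 : E) 1 \ Set.range a with hX
  -- choose the radius r
  set C : Finset ℝ := insert 0 (Finset.image (fun i => dist (a i) 0) Finset.univ) with hC
  have hCne : C.Nonempty := ⟨0, Finset.mem_insert_self _ _⟩
  set M := C.max' hCne with hM
  have hM0 : 0 ≤ M := Finset.le_max' _ _ (Finset.mem_insert_self _ _)
  have hMa : ∀ i, dist (a i) 0 ≤ M := by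
    intro i
    refine Finset.le_max' _ _ ?_
    rw [hC, Finset.mem_insert, Finset.mem_image]
    exact Or.inr ⟨i, Finset.mem_univ _, rfl⟩
  have hM1 : M < 1 := by
    rw [hM, Finset.max'_lt_iff]
    intro y hy
    rw [hC, Finset.mem_insert, Finset.mem_image] at hy
    rcases hy with rfl | ⟨i, -, rfl⟩
    · norm_num
    · simpa using haD i
  set r : ℝ := (M + 1) / 2 with hr
  have hrM : M < r := by rw [hr]; linarith
  have hr1 : r < 1 := by rw [hr]; linarith
  have hr0 : 0 < r := by rw [hr]; linarith
  -- choose the radius ε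
  set T : Finset ℝ := insert 1 ((Finset.image (fun i => r - dist (a i) 0) Finset.univ) ∪
    (Finset.image (fun ij : Fin p × Fin p =>
      if ij.1 = ij.2 then 1 else dist (a ij.1) (a ij.2) / 3) Finset.univ)) with hT
  have hTne : T.Nonempty := ⟨1, Finset.mem_insert_self _ _⟩
  set ε := T.min' hTne with hε
  have hε0 : 0 < ε := by
    rw [hε, Finset.lt_min'_iff]
    intro y hy
    rw [hT, Finset.mem_insert, Finset.mem_union, Finset.mem_image, Finset.mem_image] at hy
    rcases hy with rfl | ⟨i, -, rfl⟩ | ⟨⟨i, j⟩, -, rfl⟩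
    · norm_num
    · have := hMa i; linarith
    · by_cases hij : i = j
      · simp [hij]
      · simp only [hij, if_false]
        have := dist_pos.2 (fun h => hij (ha h))
        linarith
  have hεr : ∀ i, ε ≤ r - dist (a i) 0 := fun i =>
    Finset.min'_le _ _ (by
      rw [hT, Finset.mem_insert, Finset.mem_union, Finset.mem_image]
      exact Or.inr (Or.inl ⟨i, Finset.mem_univ _, rfl⟩))
  have hεd : ∀ i j, i ≠ j → 3 * ε ≤ dist (a i) (a j) := by
    intro i j hij
    have : (if i = j then (1:ℝ) else dist (a i) (a j) / 3) ∈ T := by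
      rw [hT, Finset.mem_insert, Finset.mem_union, Finset.mem_image, Finset.mem_image]
      exact Or.inr (Or.inr ⟨(i, j), Finset.mem_univ _, rfl⟩)
    rw [if_neg hij] at this
    have := Finset.min'_le _ _ this
    rw [← hε] at this
    linarith
  -- the pieces
  set V : Fin (p + 1) → Set E :=
    Fin.snoc (fun i => myAnn (a i) 0 ε) (myAnn 0 r 1) with hV
  have hVcast : ∀ i : Fin p, V (Fin.castSucc i) = myAnn (a i) 0 ε := by
    intro i; rw [hV, Fin.snoc_castSucc]
  have hVlast : V (Fin.last p) = myAnn 0 r 1 := by rw [hV, Fin.snoc_last]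
  have hVX : ∀ j, V j ⊆ X := by
    intro j
    refine Fin.lastCases ?_ ?_ j
    · rw [hVlast]
      rintro x ⟨h1, h2⟩
      refine ⟨mem_ball.2 h2, ?_⟩
      rintro ⟨i, rfl⟩
      have := hMa i
      linarith
    · intro i
      rw [hVcast]
      rintro x ⟨h1, h2⟩
      have hd1 : dist x 0 < 1 := by
        have := dist_triangle x (a i) 0
        have := hMa i
        have := hεr i
        linarith
      refine ⟨mem_ball.2 hd1, ?_⟩
      rintro ⟨j, rfl⟩
      by_cases hij : j = i
      · subst hij; simp at h1
      · have := hεd i j (fun h => hij h.symm)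
        rw [dist_comm] at h2
        linarith
  have hVopen : ∀ j, IsOpen (V j) := by
    intro j
    refine Fin.lastCases ?_ ?_ j
    · rw [hVlast]; exact isOpen_myAnn _ _ _
    · intro i; rw [hVcast]; exact isOpen_myAnn _ _ _
  have hVconn : ∀ j, IsPreconnected (V j) := by
    intro j
    refine Fin.lastCases ?_ ?_ j
    · rw [hVlast]; exact isPreconnected_myAnn hrank _ hr0.le
    · intro i; rw [hVcast]; exact isPreconnected_myAnn hrank _ le_rfl
  have hVne : ∀ j, (V j).Nonempty := by
    intro j
    refine Fin.lastCases ?_ ?_ j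
    · rw [hVlast]; exact myAnn_nonempty hn0 _ hr0.le hr1
    · intro i; rw [hVcast]; exact myAnn_nonempty hn0 _ le_rfl hε0
  have hVdisj : Pairwise fun j j' => Disjoint (V j) (V j') := by
    have hlc : ∀ (i : Fin p), Disjoint (V (Fin.castSucc i)) (V (Fin.last p)) := by
      intro i
      rw [hVcast, hVlast, Set.disjoint_left]
      rintro x ⟨h1, h2⟩ ⟨h3, h4⟩
      have := dist_triangle x (a i) 0
      have := hMa i
      have := hεr i
      linarith
    have hcc : ∀ (i i' : Fin p), i ≠ i' →
        Disjoint (V (Fin.castSucc i)) (V (Fin.castSucc i')) := by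
      intro i i' hii'
      rw [hVcast, hVcast, Set.disjoint_left]
      rintro x ⟨h1, h2⟩ ⟨h3, h4⟩
      have := hεd i i' hii'
      have := dist_triangle (a i) x (a i')
      rw [dist_comm (a i) x] at this
      linarith
    intro j j' hjj'
    rcases Fin.eq_castSucc_or_eq_last j with ⟨i, rfl⟩ | rfl <;>
      rcases Fin.eq_castSucc_or_eq_last j' with ⟨i', rfl⟩ | rfl
    · exact hcc i i' (fun h => hjj' (by rw [h]))
    · exact hlc i
    · exact (hlc i').symm
    · exact absurd rfl hjj'
  -- the compact set
  set Kset : Set E := Metric.closedBall 0 r \ ⋃ i, Metric.ball (a i) ε with hKset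
  have hKsetX : Kset ⊆ X := by
    rintro x ⟨h1, h2⟩
    rw [mem_closedBall] at h1
    refine ⟨mem_ball.2 (lt_of_le_of_lt h1 hr1), ?_⟩
    rintro ⟨i, rfl⟩
    exact h2 (mem_iUnion.2 ⟨i, mem_ball_self hε0⟩)
  have hKsetcpt : IsCompact Kset :=
    (isCompact_closedBall _ _).diff (isOpen_iUnion fun i => isOpen_ball)
  have hVK : ∀ j, ∀ x ∈ V j, x ∉ Kset := by
    intro j
    refine Fin.lastCases ?_ ?_ j
    · rw [hVlast]
      rintro x ⟨h1, h2⟩ ⟨h3, h4⟩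
      rw [mem_closedBall] at h3
      simp only [dist_zero_right] at *
      linarith
    · intro i
      rw [hVcast]
      rintro x ⟨h1, h2⟩ ⟨h3, h4⟩
      exact h4 (mem_iUnion.2 ⟨i, mem_ball.2 h2⟩)
  have hcover : ∀ x, x ∈ X → x ∉ Kset → ∃ j, x ∈ V j := by
    intro x hx hk
    rw [hKset, mem_diff] at hk
    push_neg at hk
    by_cases hxr : x ∈ Metric.closedBall (0:E) r
    · obtain ⟨i, hi⟩ := mem_iUnion.1 (hk hxr)
      refine ⟨Fin.castSucc i, ?_⟩
      rw [hVcast]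
      have hne : x ≠ a i := fun h => hx.2 ⟨i, h.symm⟩
      exact ⟨dist_pos.2 hne, mem_ball.1 hi⟩
    · refine ⟨Fin.last p, ?_⟩
      rw [hVlast]
      rw [mem_closedBall, not_le] at hxr
      exact ⟨hxr, mem_ball.1 hx.1⟩
  -- move to the subtype
  set K : Set ↥X := Subtype.val ⁻¹' Kset with hK
  set U : Fin (p+1) → Set ↥X := fun j => Subtype.val ⁻¹' (V j) with hU
  have himg : ∀ W : Set E, W ⊆ X → Subtype.val '' ((Subtype.val : X → E) ⁻¹' W) = W := by
    intro W hW
    rw [Subtype.image_preimage_coe]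
    exact inter_eq_self_of_subset_right hW
  have hKcpt : IsCompact K := by
    rw [hK, Subtype.isCompact_iff, himg _ hKsetX]
    exact hKsetcpt
  have hKc : (Kᶜ : Set ↥X) = ⋃ j, U j := by
    ext x
    simp only [mem_compl_iff, hK, hU, mem_preimage, mem_iUnion]
    constructor
    · intro hx
      exact hcover x.1 x.2 hx
    · rintro ⟨j, hj⟩
      exact hVK j x.1 hj
  have hUopen : ∀ j, IsOpen (U j) := fun j => (hVopen j).preimage continuous_subtype_val
  have hUne : ∀ j, (U j).Nonempty := by
    intro j
    obtain ⟨x, hx⟩ := hVne j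
    exact ⟨⟨x, hVX j hx⟩, hx⟩
  have hUdisj : Pairwise fun j j' => Disjoint (U j) (U j') := by
    intro j j' hjj'
    exact Disjoint.preimage _ (hVdisj hjj')
  have hUVimg : ∀ j, Subtype.val '' U j = V j := fun j => himg _ (hVX j)
  refine ⟨K, U, hKcpt, fun j => ⟨?_, hUne j, ?_, hUopen j, ?_, ?_⟩, hUdisj⟩
  · rw [hKc]; exact subset_iUnion U j
  · refine Topology.IsInducing.subtypeVal.isPreconnected_image.1 ?_
    rw [hUVimg j]
    exact hVconn j
  · have heq : Kᶜ \ U j = ⋃ j', ⋃ (_ : j' ≠ j), U j' := by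
      ext x
      simp only [mem_diff, hKc, mem_iUnion]
      constructor
      · rintro ⟨⟨j', hj'⟩, hnj⟩
        exact ⟨j', fun h => hnj (h ▸ hj'), hj'⟩
      · rintro ⟨j', hne, hj'⟩
        exact ⟨⟨j', hj'⟩, fun hj => Set.disjoint_left.1 (hUdisj hne) hj' hj⟩
    rw [heq]
    exact isOpen_iUnion fun j' => isOpen_iUnion fun _ => hUopen j'
  · refine Fin.lastCases ?_ ?_ j
    · have hz : (0 : E) + (1:ℝ) • e₀ n hn0 ∈ closure (myAnn (0:E) r 1) :=
        outer_mem_closure_myAnn hn0 (0:E) hr0.le hr1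
      have hzX : (0 : E) + (1:ℝ) • e₀ n hn0 ∉ X := by
        intro hmem
        have := mem_ball.1 hmem.1
        rw [dist_add_smul_e₀ hn0] at this
        norm_num at this
      have := noncompact_closure_of_limit (hVX (Fin.last p)) (by rw [hVlast]; exact hz) hzX
      simpa only [hU] using this
    · intro i
      have hz : a i ∈ closure (myAnn (a i) 0 ε) := center_mem_closure_myAnn hn0 (a i) hε0
      have hzX : a i ∉ X := fun hmem => hmem.2 ⟨i, rfl⟩
      have := noncompact_closure_of_limit (hVX (Fin.castSucc i))
        (by rw [hVcast]; exact hz) hzX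
      simpa only [hU] using this

lemma le_of_endsGe (hn : 2 ≤ n) {p : ℕ} (a : Fin p → E)
    (ha : Function.Injective a) (haD : ∀ i, a i ∈ Metric.ball (0 : E) 1)
    {k : ℕ} (h : EndsGe ↥(Metric.ball (0 : E) 1 \ Set.range a : Set E) k) :
    k ≤ p + 1 := by
  have hn0 : 0 < n := by omega
  have hrank : 1 < Module.rank ℝ (EuclideanSpace ℝ (Fin n)) :=
    Module.one_lt_rank_of_one_lt_finrank (by rw [finrank_euclideanSpace_fin]; omega)
  set X : Set E := Metric.ball (0 : E) 1 \ Set.range a with hX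
  obtain ⟨K, U, hKcpt, hU, hUdisj⟩ := h
  set KE : Set E := Subtype.val '' K with hKE
  have hKEcpt : IsCompact KE := hKcpt.image continuous_subtype_val
  have hKEX : KE ⊆ X := by rintro x ⟨⟨y, hy⟩, -, rfl⟩; exact hy
  -- radius for the outer annulus
  set C : Set E := insert 0 (KE ∪ Set.range a) with hC
  have hCcpt : IsCompact C := ((hKEcpt.union (Set.finite_range a).isCompact).insert 0)
  have hCD : ∀ y ∈ C, dist y 0 < 1 := by
    intro y hy
    rcases hy with rfl | hy | ⟨i, rfl⟩
    · simp
    · exact mem_ball.1 (hKEX hy).1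
    · exact mem_ball.1 (haD _)
  obtain ⟨x₀, hx₀C, hx₀max⟩ := hCcpt.exists_isMaxOn ⟨0, mem_insert _ _⟩
    ((continuous_id.dist continuous_const).continuousOn)
  set M : ℝ := dist x₀ 0 with hMdef
  have hM0 : 0 ≤ M := dist_nonneg
  have hM1 : M < 1 := hCD _ hx₀C
  set r : ℝ := (M + 1) / 2 with hr
  have hrM : M < r := by rw [hr]; linarith
  have hr1 : r < 1 := by rw [hr]; linarith
  have hr0 : 0 < r := by rw [hr]; linarith
  have hCr : ∀ y ∈ C, dist y 0 < r := fun y hy => lt_of_le_of_lt (hx₀max hy) hrM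
  -- radii for the punctured balls
  have hball : ∀ i : Fin p, ∃ ε > 0, Metric.ball (a i) ε ⊆
      Metric.ball (0 : E) 1 ∩ KEᶜ ∩ (Set.range a \ {a i})ᶜ := by
    intro i
    have hopen : IsOpen (Metric.ball (0 : E) 1 ∩ KEᶜ ∩ (Set.range a \ {a i})ᶜ) :=
      (isOpen_ball.inter hKEcpt.isClosed.isOpen_compl).inter
        ((Set.Finite.diff (Set.finite_range a)).isClosed.isOpen_compl)
    have hmem : a i ∈ Metric.ball (0 : E) 1 ∩ KEᶜ ∩ (Set.range a \ {a i})ᶜ := by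
      refine ⟨⟨haD i, fun hK => ?_⟩, fun hd => hd.2 rfl⟩
      exact (hKEX hK).2 ⟨i, rfl⟩
    exact Metric.isOpen_iff.1 hopen _ hmem
  choose ε hε0 hεsub using hball
  -- the probe sets
  set W : Fin (p + 1) → Set E :=
    Fin.snoc (fun i => myAnn (a i) 0 (ε i)) (myAnn 0 r 1) with hW
  have hWcast : ∀ i : Fin p, W (Fin.castSucc i) = myAnn (a i) 0 (ε i) := by
    intro i; rw [hW, Fin.snoc_castSucc]
  have hWlast : W (Fin.last p) = myAnn 0 r 1 := by rw [hW, Fin.snoc_last]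
  have hWX : ∀ j, W j ⊆ X \ KE := by
    intro j
    refine Fin.lastCases ?_ ?_ j
    · rw [hWlast]
      rintro x ⟨h1, h2⟩
      have hxa : ∀ y ∈ C, x ≠ y := by
        rintro y hy rfl
        exact absurd (hCr _ hy) (by linarith)
      refine ⟨⟨mem_ball.2 h2, ?_⟩, ?_⟩
      · rintro ⟨i, rfl⟩
        exact hxa _ (by rw [hC]; exact Set.mem_insert_of_mem _ (Or.inr ⟨i, rfl⟩)) rfl
      · intro hk
        exact hxa _ (by rw [hC]; exact Set.mem_insert_of_mem _ (Or.inl hk)) rfl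
    · intro i
      rw [hWcast]
      rintro x ⟨h1, h2⟩
      obtain ⟨⟨hx1, hx2⟩, hx3⟩ := hεsub i (mem_ball.2 h2)
      refine ⟨⟨hx1, ?_⟩, hx2⟩
      rintro ⟨j, rfl⟩
      by_cases hji : a j = a i
      · rw [hji, dist_self] at h1
        exact lt_irrefl _ h1
      · exact hx3 ⟨⟨j, rfl⟩, hji⟩
  have hWconn : ∀ j, IsPreconnected (W j) := by
    intro j
    refine Fin.lastCases ?_ ?_ j
    · rw [hWlast]; exact isPreconnected_myAnn hrank _ hr0.le
    · intro i; rw [hWcast]; exact isPreconnected_myAnn hrank _ le_rfl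
  have hWne : ∀ j, (W j).Nonempty := by
    intro j
    refine Fin.lastCases ?_ ?_ j
    · rw [hWlast]; exact myAnn_nonempty hn0 _ hr0.le hr1
    · intro i; rw [hWcast]; exact myAnn_nonempty hn0 _ le_rfl (hε0 i)
  -- each U i meets some probe
  have key : ∀ i : Fin k, ∃ j, (Subtype.val '' U i ∩ W j).Nonempty := by
    intro i
    obtain ⟨hsub, hne, hconn, hopen, hopen', hncpt⟩ := hU i
    set Ti : Set E := Subtype.val '' U i with hTi
    have hTiX : Ti ⊆ X := by rintro x ⟨⟨y, hy⟩, -, rfl⟩; exact hy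
    have hzex : ∃ z ∈ closure Ti, z ∉ X := by
      by_contra hcon
      push_neg at hcon
      have hclX : closure Ti ⊆ X := hcon
      have hclcpt : IsCompact (closure Ti) :=
        (isCompact_closedBall (0:E) 1).of_isClosed_subset isClosed_closure
          (closure_minimal (fun x hx => ball_subset_closedBall (hTiX hx).1) Metric.isClosed_closedBall)
      apply hncpt
      have hcleq : closure (U i) = Subtype.val ⁻¹' (closure Ti) :=
        Topology.IsInducing.subtypeVal.closure_eq_preimage_closure_image (U i)
      rw [hcleq, Subtype.isCompact_iff, Subtype.image_preimage_coe,
        inter_eq_self_of_subset_right hclX]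
      exact hclcpt
    obtain ⟨z, hz1, hz2⟩ := hzex
    by_cases hza : z ∈ Set.range a
    · obtain ⟨j, rfl⟩ := hza
      obtain ⟨y, hy, hyd⟩ := Metric.mem_closure_iff.1 hz1 _ (hε0 j)
      refine ⟨Fin.castSucc j, y, hy, ?_⟩
      rw [hWcast]
      have hyX := hTiX hy
      exact ⟨dist_pos.2 (fun hya => hyX.2 ⟨j, hya.symm⟩), by rwa [dist_comm] at hyd⟩
    · have hz1' : 1 ≤ dist z 0 := by
        by_contra hlt
        push_neg at hlt
        exact hz2 ⟨mem_ball.2 hlt, hza⟩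
      obtain ⟨y, hy, hyd⟩ := Metric.mem_closure_iff.1 hz1 _ (by linarith : (0:ℝ) < 1 - r)
      refine ⟨Fin.last p, y, hy, ?_⟩
      rw [hWlast]
      have hyX := hTiX hy
      have htri := dist_triangle z y 0
      refine ⟨by linarith, mem_ball.1 hyX.1⟩
  -- each U i absorbs the probe it meets
  have absorb : ∀ i : Fin k, ∃ j, (Subtype.val ⁻¹' (W j) : Set ↥X) ⊆ U i := by
    intro i
    obtain ⟨j, y, hyU, hyW⟩ := key i
    obtain ⟨hsub, hne, hconn, hopen, hopen', hncpt⟩ := hU i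
    refine ⟨j, ?_⟩
    set P : Set ↥X := Subtype.val ⁻¹' (W j) with hP
    have hPK : P ⊆ Kᶜ := by
      intro x hx hxK
      exact ((hWX j) hx).2 ⟨x, hxK, rfl⟩
    have hPconn : IsPreconnected P := by
      refine Topology.IsInducing.subtypeVal.isPreconnected_image.1 ?_
      rw [hP, Subtype.image_preimage_coe,
        inter_eq_self_of_subset_right (fun x hx => ((hWX j) hx).1)]
      exact hWconn j
    refine hPconn.subset_left_of_subset_union hopen hopen' disjoint_sdiff_self_right ?_ ?_
    · intro x hx
      rcases Classical.em (x ∈ U i) with hmem | hmem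
      · exact Or.inl hmem
      · exact Or.inr ⟨hPK hx, hmem⟩
    · obtain ⟨u, huU, hu⟩ := hyU
      refine ⟨u, ?_, huU⟩
      rw [hP]
      show Subtype.val u ∈ W j
      rw [hu]
      exact hyW
  choose g hg using absorb
  have hWne' : ∀ j, ((Subtype.val ⁻¹' (W j)) : Set ↥X).Nonempty := by
    intro j
    obtain ⟨x, hx⟩ := hWne j
    exact ⟨⟨x, ((hWX j) hx).1⟩, hx⟩
  have hginj : Function.Injective g := by
    intro i i' hgii
    by_contra hne
    obtain ⟨x, hx⟩ := hWne' (g i)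
    have h1 : x ∈ U i := hg i hx
    rw [hgii] at hx
    have h2 : x ∈ U i' := hg i' hx
    exact Set.disjoint_left.1 (hUdisj hne) h1 h2
  have := Fintype.card_le_of_injective g hginj
  simpa using this

end Main

/-- For p ≠ q, the open unit ball of ℝⁿ (n ≥ 2) with p points removed is not
homeomorphic to the open unit ball with q points removed. -/
theorem stmt_16 (n : ℕ) (hn : 2 ≤ n) (p q : ℕ) (hpq : p ≠ q)
    (a : Fin p → EuclideanSpace ℝ (Fin n)) (ha : Function.Injective a)
    (haD : ∀ i, a i ∈ Metric.ball (0 : EuclideanSpace ℝ (Fin n)) 1)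
    (b : Fin q → EuclideanSpace ℝ (Fin n)) (hb : Function.Injective b)
    (hbD : ∀ i, b i ∈ Metric.ball (0 : EuclideanSpace ℝ (Fin n)) 1) :
    IsEmpty
      ((Metric.ball (0 : EuclideanSpace ℝ (Fin n)) 1 \ Set.range a : Set (EuclideanSpace ℝ (Fin n))) ≃ₜ
       (Metric.ball (0 : EuclideanSpace ℝ (Fin n)) 1 \ Set.range b : Set (EuclideanSpace ℝ (Fin n)))) := by
  constructor
  intro h
  have h1 := endsGe_ball_diff hn b hb hbD
  have h2 := h1.of_homeomorph h.symm
  have h3 := le_of_endsGe hn a ha haD h2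
  have h4 := endsGe_ball_diff hn a ha haD
  have h5 := h4.of_homeomorph h
  have h6 := le_of_endsGe hn b hb hbD h5
  omega
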